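/- Let E be a real inner product space, ι a finite index type, d : ι → E data points, K a natural number, μ : Fin K → E centroids, and c : ι → Fin K an assignment. Let c* : ι → Fin K be a nearest-centroid assignment with respect to μ (∀ i j, ‖d(i) − μ(c*(i))‖ ≤ ‖d(i) − μ(j)‖), assume every cluster under c* is nonempty, and let μ'(j) be the mean of the points {d(i) : c*(i) = j} for each j. Then Σ_{i} ‖d(i) − μ'(c*(i))‖² ≤ Σ_{i} ‖d(i) − μ(c(i))‖²; that is, one full K-means iteration (assignment step followed by update step) does not increase the WCSS objective. -/

import Mathlib

open Finset in
lemma sum_sq_dist_mean_le {E : Type*} [NormedAddCommGroup E] [InnerProductSpace ℝ E]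
    {ι : Type*} (s : Finset ι) (hs : s.Nonempty) (d : ι → E) (y : E) :
    ∑ i ∈ s, ‖d i - (s.card : ℝ)⁻¹ • ∑ i ∈ s, d i‖ ^ 2 ≤ ∑ i ∈ s, ‖d i - y‖ ^ 2 := by
  set m := (s.card : ℝ)⁻¹ • ∑ i ∈ s, d i with hm
  have hc : (s.card : ℝ) ≠ 0 := Nat.cast_ne_zero.2 hs.card_pos.ne'
  have hzero : ∑ i ∈ s, (d i - m) = 0 := by
    rw [Finset.sum_sub_distrib, Finset.sum_const, sub_eq_zero, hm,
      ← Nat.cast_smul_eq_nsmul ℝ, smul_smul, mul_inv_cancel₀ hc, one_smul]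
  have expand : ∀ i ∈ s, ‖d i - y‖ ^ 2
      = ‖d i - m‖ ^ 2 + 2 * inner ℝ (d i - m) (m - y) + ‖m - y‖ ^ 2 := by
    intro i _
    rw [← sub_add_sub_cancel (d i) m y]
    exact norm_add_sq_real _ _
  rw [Finset.sum_congr rfl expand]
  rw [Finset.sum_add_distrib, Finset.sum_add_distrib, ← Finset.mul_sum, ← sum_inner, hzero,
    inner_zero_left, mul_zero, add_zero]
  have : (0:ℝ) ≤ ∑ _x ∈ s, ‖m - y‖ ^ 2 :=
    Finset.sum_nonneg fun _ _ => sq_nonneg _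
  linarith

/-- One full K-means iteration (nearest-centroid assignment step followed by
mean update step) does not increase the WCSS objective. -/
theorem kmeans_iteration_nonincreasing {E : Type*} [NormedAddCommGroup E]
    [InnerProductSpace ℝ E] {ι : Type*} [Fintype ι] (d : ι → E)
    (K : ℕ) (μ : Fin K → E) (c cstar : ι → Fin K)
    (hstar : ∀ i j, ‖d i - μ (cstar i)‖ ≤ ‖d i - μ j‖)
    (hne : ∀ j : Fin K, ∃ i, cstar i = j)
    (μ' : Fin K → E)
    (hμ' : ∀ j, μ' j
      = (((Finset.univ.filter (fun i => cstar i = j)).card : ℝ))⁻¹ •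
          ∑ i ∈ Finset.univ.filter (fun i => cstar i = j), d i) :
    ∑ i, ‖d i - μ' (cstar i)‖ ^ 2 ≤ ∑ i, ‖d i - μ (c i)‖ ^ 2 := by
  have step1 : ∑ i, ‖d i - μ (cstar i)‖ ^ 2 ≤ ∑ i, ‖d i - μ (c i)‖ ^ 2 := by
    apply Finset.sum_le_sum
    intro i _
    exact pow_le_pow_left₀ (norm_nonneg _) (hstar i (c i)) 2
  refine le_trans ?_ step1
  have h1 : ∀ (ν : Fin K → E), ∑ i, ‖d i - ν (cstar i)‖ ^ 2
      = ∑ j : Fin K, ∑ i ∈ Finset.univ.filter (fun i => cstar i = j), ‖d i - ν j‖ ^ 2 := by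
    intro ν
    rw [← Finset.sum_fiberwise Finset.univ cstar (fun i => ‖d i - ν (cstar i)‖ ^ 2)]
    refine Finset.sum_congr rfl fun j _ => Finset.sum_congr rfl fun i hi => ?_
    rw [(Finset.mem_filter.1 hi).2]
  rw [h1 μ', h1 μ]
  apply Finset.sum_le_sum
  intro j _
  have hns : (Finset.univ.filter (fun i => cstar i = j)).Nonempty := by
    obtain ⟨i, hi⟩ := hne j
    exact ⟨i, Finset.mem_filter.2 ⟨Finset.mem_univ i, hi⟩⟩
  rw [hμ' j]
  exact sum_sq_dist_mean_le _ hns d (μ j)
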